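/- Equip ℝ^d, for a fixed integer d ≥ 1, with the sup norm ‖x‖∞ = max over coordinates μ of |x_μ|, and for m ∈ ℤ^d let C_m := m + [0,1]^d ⊆ ℝ^d denote the closed unit cube with lower corner m. For a finite vertex set I, a tree on I is a simple graph on I that is connected and acyclic. Let n ≥ 1, let x : Fin n → ℝ^d, and suppose there is an injective map m : Fin n → ℤ^d with x_i ∈ C_{m_i} for every i (so the points lie in pairwise distinct closed unit lattice cubes). If τ is a tree on Fin n and ℓ := Σ_{{i,j} an edge of τ} ‖x_i − x_j‖∞, then n ≤ 4·(2^d + 1)·(ℓ + 1). -/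

import Mathlib

/-- The total length of the edges of a graph `τ` on a vertex type `V`, whose vertices are
placed in a (pseudo)metric space via `p : V → M`. -/
noncomputable def treeEdgeSum {V M : Type*} [PseudoMetricSpace M]
    (τ : SimpleGraph V) (p : V → M) : ℝ :=
  ∑' e : τ.edgeSet,
    Sym2.lift ⟨fun u v => dist (p u) (p v), fun u v => dist_comm (p u) (p v)⟩ (e : Sym2 V)

section Chain

variable {V : Type*} {M : Type*} [PseudoMetricSpace M]

/-- Sum of consecutive distances along a list. -/
def chainLen (p : V → M) : List V → ℝ
  | [] => 0
  | [_] => 0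
  | a :: b :: t => dist (p a) (p b) + chainLen p (b :: t)

@[simp] lemma chainLen_nil (p : V → M) : chainLen p [] = 0 := rfl
@[simp] lemma chainLen_single (p : V → M) (a : V) : chainLen p [a] = 0 := rfl
@[simp] lemma chainLen_cons_cons (p : V → M) (a b : V) (t : List V) :
    chainLen p (a :: b :: t) = dist (p a) (p b) + chainLen p (b :: t) := rfl

lemma chainLen_nonneg (p : V → M) (L : List V) : 0 ≤ chainLen p L := by
  induction L with
  | nil => simp
  | cons a t ih =>
    cases t with
    | nil => simp
    | cons b t => simpa using add_nonneg dist_nonneg ih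

lemma chainLen_map {W : Type*} (p : V → M) (f : W → V) (L : List W) :
    chainLen p (L.map f) = chainLen (p ∘ f) L := by
  induction L with
  | nil => rfl
  | cons a t ih =>
    cases t with
    | nil => rfl
    | cons b t => simp_all [chainLen]

lemma chainLen_le_cons (p : V → M) (a : V) (L : List V) :
    chainLen p L ≤ chainLen p (a :: L) := by
  cases L with
  | nil => simp
  | cons c s =>
    simp only [chainLen_cons_cons]
    linarith [dist_nonneg (x := p a) (y := p c)]

lemma dist_head_le (p : V → M) (a h : V) (t : List V) (ha : a ∈ h :: t) :
    dist (p h) (p a) ≤ chainLen p (h :: t) := by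
  induction t generalizing h with
  | nil => rcases List.mem_singleton.1 ha with rfl; simp
  | cons b t ih =>
    rcases List.mem_cons.1 ha with rfl | ha'
    · simpa using add_nonneg dist_nonneg (chainLen_nonneg p (b :: t))
    · calc dist (p h) (p a) ≤ dist (p h) (p b) + dist (p b) (p a) := dist_triangle _ _ _
        _ ≤ dist (p h) (p b) + chainLen p (b :: t) := by
            exact add_le_add_right (ih b ha') _
        _ = chainLen p (h :: b :: t) := by simp

lemma dist_le_chainLen (p : V → M) {a b : V} {L : List V} (ha : a ∈ L) (hb : b ∈ L) :
    dist (p a) (p b) ≤ chainLen p L := by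
  induction L with
  | nil => simp at ha
  | cons h t ih =>
    rcases List.mem_cons.1 ha with rfl | ha'
    · exact dist_head_le p b a t hb
    · rcases List.mem_cons.1 hb with rfl | hb'
      · rw [dist_comm]; exact dist_head_le p a b t ha
      · cases t with
        | nil => simp at ha'
        | cons c t =>
          calc dist (p a) (p b) ≤ chainLen p (c :: t) := ih ha' hb'
            _ ≤ chainLen p (h :: c :: t) := chainLen_le_cons p h _

lemma chainLen_cons_le (p : V → M) (a b : V) (L : List V) :
    chainLen p (a :: L) ≤ dist (p a) (p b) + chainLen p (b :: L) := by
  cases L with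
  | nil => simpa using dist_nonneg
  | cons c t =>
    simp only [chainLen_cons_cons]
    rw [← add_assoc]
    exact add_le_add_left (dist_triangle _ _ _) _

lemma chainLen_sublist_cons (p : V → M) {l₁ l₂ : List V} (h : l₁.Sublist l₂) :
    ∀ a, chainLen p (a :: l₁) ≤ chainLen p (a :: l₂) := by
  induction h with
  | slnil => intro a; exact le_refl _
  | cons b h ih =>
    intro a
    calc chainLen p (a :: _) ≤ chainLen p (a :: _) := ih a
      _ ≤ dist (p a) (p b) + chainLen p (b :: _) := chainLen_cons_le p a b _
      _ = chainLen p (a :: b :: _) := by simp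
  | cons_cons b h ih =>
    intro a
    simp only [chainLen_cons_cons]
    exact add_le_add_right (ih b) _

lemma chainLen_suffix_le (p : V → M) (pre L : List V) :
    chainLen p L ≤ chainLen p (pre ++ L) := by
  induction pre with
  | nil => simp
  | cons a t ih => exact ih.trans (chainLen_le_cons p a _)

lemma chainLen_sublist (p : V → M) {l₁ l₂ : List V} (h : l₁.Sublist l₂) :
    chainLen p l₁ ≤ chainLen p l₂ := by
  induction h with
  | slnil => exact le_refl _
  | cons b h ih => exact ih.trans (chainLen_le_cons p b _)
  | cons_cons b h ih => exact chainLen_sublist_cons p h b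

lemma chainLen_insert_mid (p : V → M) (A B : List V) (a b : V) :
    chainLen p (A ++ a :: b :: a :: B) = chainLen p (A ++ a :: B) + 2 * dist (p a) (p b) := by
  induction A with
  | nil => simp [chainLen, dist_comm (p b) (p a)]; ring
  | cons c A ih =>
    cases A with
    | nil => simp [chainLen, dist_comm (p b) (p a)]; ring
    | cons e A => simp only [List.cons_append, chainLen_cons_cons] at *; rw [ih]; ring

end Chain

section Tour

open SimpleGraph

variable {V : Type} {G : SimpleGraph V}

lemma reachable_comap_of_walk {v : V} :
    ∀ {a b : V} (w : G.Walk a b), v ∉ w.support → ∀ (ha : a ≠ v) (hb : b ≠ v),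
    (G.comap (Subtype.val : {w : V // w ≠ v} → V)).Reachable ⟨a, ha⟩ ⟨b, hb⟩ := by
  intro a b w
  induction w with
  | nil => intro _ ha hb; exact Reachable.refl _
  | @cons a c b h q ih =>
    intro hv ha hb
    have hc : c ≠ v := by
      intro h'
      exact hv (by rw [Walk.support_cons]; exact List.mem_cons_of_mem _ (h' ▸ q.start_mem_support))
    have hv' : v ∉ q.support := fun hmem => hv (by rw [Walk.support_cons]; exact List.mem_cons_of_mem _ hmem)
    exact (SimpleGraph.Adj.reachable (by exact h : (G.comap Subtype.val).Adj ⟨a, ha⟩ ⟨c, hc⟩)).trans (ih hv' hc hb)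

lemma exists_snd_of_walk {x y : V} (w : G.Walk x y) (hxy : x ≠ y) :
    ∃ c, G.Adj x c ∧ c ∈ w.support.tail := by
  cases w with
  | nil => exact absurd rfl hxy
  | cons h q => exact ⟨_, h, by simpa using q.start_mem_support⟩

lemma leaf_not_mem_path_support [Fintype V] [DecidableRel G.Adj] {v w₁ w₂ : V}
    (hdeg : G.degree v = 1) (h1 : w₁ ≠ v) (h2 : w₂ ≠ v)
    {P : G.Walk w₁ w₂} (hP : P.IsPath) : v ∉ P.support := by
  classical
  intro hv
  obtain ⟨b, hvb, hbmem⟩ := exists_snd_of_walk (P.dropUntil v hv) (Ne.symm h2)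
  obtain ⟨a, hva, hamem⟩ := exists_snd_of_walk (P.takeUntil v hv).reverse (Ne.symm h1)
  have hamem' : a ∈ (P.takeUntil v hv).support := by
    have : a ∈ (P.takeUntil v hv).reverse.support := List.mem_of_mem_tail hamem
    rwa [Walk.support_reverse, List.mem_reverse] at this
  have hnd : ((P.takeUntil v hv).support ++ (P.dropUntil v hv).support.tail).Nodup := by
    rw [← Walk.support_append, Walk.take_spec]
    exact hP.support_nodup
  have hdisj := List.disjoint_of_nodup_append hnd
  have hab : a ≠ b := fun h => (hdisj hamem' (h ▸ hbmem))
  have hsub : ({a, b} : Finset V) ⊆ G.neighborFinset v := by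
    intro c hc
    rcases Finset.mem_insert.1 hc with rfl | hc
    · exact (SimpleGraph.mem_neighborFinset _ _ _).2 hva
    · rw [Finset.mem_singleton] at hc
      exact hc ▸ (SimpleGraph.mem_neighborFinset _ _ _).2 hvb
  have : ({a, b} : Finset V).card ≤ 1 := hdeg ▸ Finset.card_le_card hsub
  rw [Finset.card_insert_of_notMem (by simpa using hab), Finset.card_singleton] at this
  omega

open SimpleGraph

noncomputable def sym2Len {V : Type*} {M : Type*} [PseudoMetricSpace M] (p : V → M) :
    Sym2 V → ℝ :=
  Sym2.lift ⟨fun u v => dist (p u) (p v), fun u v => dist_comm (p u) (p v)⟩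

@[simp] lemma sym2Len_mk {V M : Type*} [PseudoMetricSpace M] (p : V → M) (u v : V) :
    sym2Len p s(u, v) = dist (p u) (p v) := rfl

lemma sym2Len_nonneg {V M : Type*} [PseudoMetricSpace M] (p : V → M) (e : Sym2 V) :
    0 ≤ sym2Len p e := by
  induction e using Sym2.ind with
  | _ u v => simpa using dist_nonneg

lemma tree_tour {M : Type*} [PseudoMetricSpace M] :
    ∀ (N : ℕ) {V : Type} [Fintype V] [DecidableEq V] (G : SimpleGraph V)
      [DecidableRel G.Adj], Fintype.card V ≤ N → G.IsTree → ∀ (p : V → M),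
      ∃ L : List V, (∀ v : V, v ∈ L) ∧
        chainLen p L ≤ 2 * ∑ e ∈ G.edgeFinset, sym2Len p e := by
  intro N
  induction N with
  | zero =>
    intro V _ _ G _ hcard hG p
    have : Nonempty V := hG.isConnected.nonempty
    have := Fintype.card_pos (α := V)
    omega
  | succ N ih =>
    intro V _ _ G _ hcard hG p
    have hne : Nonempty V := hG.isConnected.nonempty
    by_cases hone : Fintype.card V ≤ 1
    · obtain ⟨v⟩ := hne
      have hsub : Subsingleton V := Fintype.card_le_one_iff_subsingleton.1 hone
      refine ⟨[v], fun w => by simp [Subsingleton.elim w v], ?_⟩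
      simp only [chainLen_single]
      have : (0:ℝ) ≤ ∑ e ∈ G.edgeFinset, sym2Len p e :=
        Finset.sum_nonneg fun e _ => sym2Len_nonneg p e
      linarith
    · push_neg at hone
      -- every vertex has positive degree
      have hdegpos : ∀ v : V, 0 < G.degree v := by
        intro v
        rw [degree_pos_iff_exists_adj]
        obtain ⟨w, hw⟩ := Fintype.exists_ne_of_one_lt_card hone v
        obtain ⟨wlk⟩ := hG.isConnected.preconnected v w
        cases wlk with
        | nil => exact absurd rfl hw
        | cons h q => exact ⟨_, h⟩
      -- there is a leaf
      obtain ⟨v, hdeg⟩ : ∃ v : V, G.degree v = 1 := by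
        by_contra hno
        push_neg at hno
        have h2 : ∀ v : V, 2 ≤ G.degree v := by
          intro v
          have := hdegpos v
          have := hno v
          omega
        have hsum := G.sum_degrees_eq_twice_card_edges
        have hcardE := hG.card_edgeFinset
        have : 2 * Fintype.card V ≤ ∑ v : V, G.degree v := by
          calc 2 * Fintype.card V = ∑ _v : V, 2 := by
                rw [Finset.sum_const, smul_eq_mul, Finset.card_univ, mul_comm]
            _ ≤ ∑ v : V, G.degree v := Finset.sum_le_sum fun v _ => h2 v
        omega
      -- its unique neighbor
      obtain ⟨u, huN⟩ := Finset.card_eq_one.1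
        (show (G.neighborFinset v).card = 1 by rw [G.card_neighborFinset_eq_degree, hdeg])
      have hu : G.Adj v u := by
        have : u ∈ G.neighborFinset v := by simp [huN]
        rwa [mem_neighborFinset] at this
      have huv : u ≠ v := hu.ne'
      -- the graph with the leaf removed
      let f : {w : V // w ≠ v} ↪ V := Function.Embedding.subtype _
      let G' : SimpleGraph {w : V // w ≠ v} := G.comap f
      haveI : DecidableRel G'.Adj := fun a b => (by infer_instance : Decidable (G.Adj a.1 b.1))
      have hcard' : Fintype.card {w : V // w ≠ v} ≤ N := by
        have h1 : Fintype.card {w : V // w ≠ v} = Fintype.card V - 1 := by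
          simp [Fintype.card_subtype_compl]
        omega
      have hG' : G'.IsTree := by
        constructor
        · rw [connected_iff]
          refine ⟨?_, ⟨⟨u, huv⟩⟩⟩
          rintro ⟨w₁, h1⟩ ⟨w₂, h2⟩
          obtain ⟨P, hP, -⟩ := hG.existsUnique_path w₁ w₂
          exact reachable_comap_of_walk P (leaf_not_mem_path_support hdeg h1 h2 hP) h1 h2
        · intro a c hc
          exact hG.IsAcyclic ((c.map (SimpleGraph.Embedding.comap f G).toHom))
            (hc.map (SimpleGraph.Embedding.comap f G).injective)
      obtain ⟨L', hcov', hlen'⟩ := ih G' hcard' hG' (p ∘ f)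
      obtain ⟨A, B, hAB⟩ := List.append_of_mem (hcov' ⟨u, huv⟩)
      refine ⟨(A.map f) ++ u :: v :: u :: (B.map f), ?_, ?_⟩
      · intro w
        by_cases hwv : w = v
        · subst hwv; simp
        · have : (⟨w, hwv⟩ : {w : V // w ≠ v}) ∈ L' := hcov' _
          rw [hAB] at this
          rcases List.mem_append.1 this with h | h
          · exact List.mem_append.2 (Or.inl (List.mem_map_of_mem (f := f) h))
          · rcases List.mem_cons.1 h with h | h
            · have : w = u := congrArg Subtype.val h
              subst this; simp
            · refine List.mem_append.2 (Or.inr ?_)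
              simp only [List.mem_cons]
              exact Or.inr (Or.inr (Or.inr (List.mem_map_of_mem (f := f) h)))
      · -- length bound
        have hins := chainLen_insert_mid p (A.map f) (B.map f) u v
        have hmapeq : (A.map f) ++ u :: (B.map f) = L'.map f := by
          rw [hAB]; simp [f]
        have hlenmap : chainLen p (L'.map f) = chainLen (p ∘ f) L' := chainLen_map p f L'
        -- edge sum comparison
        have hedge : ∑ e ∈ G'.edgeFinset, sym2Len (p ∘ f) e + dist (p v) (p u)
            ≤ ∑ e ∈ G.edgeFinset, sym2Len p e := by
          have himg : ∑ e ∈ G'.edgeFinset, sym2Len (p ∘ f) e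
              = ∑ e ∈ G'.edgeFinset.image (Sym2.map f), sym2Len p e := by
            rw [Finset.sum_image (fun a _ b _ h => Sym2.map.injective f.injective h)]
            refine Finset.sum_congr rfl fun e _ => ?_
            induction e using Sym2.ind with
            | _ a b => simp [Sym2.map_pair_eq]
          have hsubset : G'.edgeFinset.image (Sym2.map f)
              ⊆ G.edgeFinset.erase s(v, u) := by
            intro e he
            obtain ⟨e', he', rfl⟩ := Finset.mem_image.1 he
            induction e' using Sym2.ind with
            | _ a b =>
              have hadj : G'.Adj a b := by rwa [mem_edgeFinset, mem_edgeSet] at he'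
              refine Finset.mem_erase.2 ⟨?_, ?_⟩
              · intro hcontra
                have hv : v ∈ Sym2.map f s(a, b) := by rw [hcontra]; simp [Sym2.mem_iff]
                rw [Sym2.map_pair_eq, Sym2.mem_iff] at hv
                rcases hv with hv | hv
                · exact a.2 hv.symm
                · exact b.2 hv.symm
              · rw [Sym2.map_pair_eq, mem_edgeFinset]
                exact hadj
          calc ∑ e ∈ G'.edgeFinset, sym2Len (p ∘ f) e + dist (p v) (p u)
              = ∑ e ∈ G'.edgeFinset.image (Sym2.map f), sym2Len p e + sym2Len p s(v,u) := by
                rw [himg]; simp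
            _ ≤ ∑ e ∈ G.edgeFinset.erase s(v,u), sym2Len p e + sym2Len p s(v,u) := by
                exact add_le_add_left (Finset.sum_le_sum_of_subset_of_nonneg hsubset
                  (fun e _ _ => sym2Len_nonneg p e)) _
            _ = ∑ e ∈ G.edgeFinset, sym2Len p e := by
                rw [Finset.sum_erase_add _ _ (by rw [mem_edgeFinset]; exact hu)]
        calc chainLen p ((A.map f) ++ u :: v :: u :: (B.map f))
            = chainLen p ((A.map f) ++ u :: (B.map f)) + 2 * dist (p u) (p v) := hins
          _ = chainLen (p ∘ f) L' + 2 * dist (p u) (p v) := by rw [hmapeq, hlenmap]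
          _ ≤ 2 * ∑ e ∈ G'.edgeFinset, sym2Len (p ∘ f) e + 2 * dist (p u) (p v) := by
              linarith
          _ ≤ 2 * ∑ e ∈ G.edgeFinset, sym2Len p e := by
              rw [dist_comm (p u) (p v)] at *
              linarith

end Tour

section Count

variable {V : Type*} {M : Type*} [PseudoMetricSpace M]

lemma chainLen_junction (p : V → M) (a : V) (B' : List V) :
    ∀ A : List V, chainLen p (A ++ [a]) + chainLen p (a :: B') ≤ chainLen p (A ++ a :: B') := by
  intro A
  induction A with
  | nil => simp
  | cons b A ih =>
    cases A with
    | nil => simp [chainLen]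
    | cons c A =>
      simp only [List.cons_append, chainLen_cons_cons] at *
      linarith

lemma chainLen_take_add (p : V → M) (L : List V) {j k : ℕ} (hjk : j ≤ k) (hk : k < L.length) :
    chainLen p (L.take (j+1)) + dist (p L[j]) (p L[k]) ≤ chainLen p (L.take (k+1)) := by
  have hj : j < L.length := lt_of_le_of_lt hjk hk
  have hjt : j < (L.take (k+1)).length := by
    rw [List.length_take]; omega
  set D := (L.take (k+1)).drop j with hDdef
  have hD : D = L[j] :: (L.take (k+1)).drop (j+1) := by
    rw [hDdef, List.drop_eq_getElem_cons hjt]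
    congr 1
    exact List.getElem_take
  have hsplit : L.take (k+1) = L.take j ++ D := by
    conv_lhs => rw [← List.take_append_drop j (L.take (k+1))]
    rw [List.take_take]
    have : min j (k+1) = j := by omega
    rw [this]
  have htj1 : L.take (j+1) = L.take j ++ [L[j]] := by
    rw [List.take_succ, List.getElem?_eq_getElem hj]
    rfl
  have h2 : (List.drop j (List.take (k+1) L))[k-j]'(by
      rw [List.length_drop, List.length_take]; omega) = L[k] := by
    rw [List.getElem_drop, List.getElem_take]
    simp only [Nat.add_sub_cancel' hjk]
  have hmemk : L[k] ∈ D := by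
    rw [hDdef]
    exact h2 ▸ List.getElem_mem _
  have hmemj : L[j] ∈ D := by rw [hD]; exact List.mem_cons_self
  calc chainLen p (L.take (j+1)) + dist (p L[j]) (p L[k])
      ≤ chainLen p (L.take j ++ [L[j]]) + chainLen p D := by
        rw [htj1]
        exact add_le_add_right (dist_le_chainLen p hmemj hmemk) _
  _ ≤ chainLen p (L.take j ++ D) := by rw [hD]; exact chainLen_junction p _ _ _
  _ = chainLen p (L.take (k+1)) := by rw [← hsplit]

/-- A finite set of integer points that pairwise differ by at most 1 in each coordinate
has at most `2^d` elements. -/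
lemma card_le_two_pow_of_pairwise_close {d : ℕ} (S : Finset (Fin d → ℤ))
    (h : ∀ p ∈ S, ∀ q ∈ S, ∀ μ, |p μ - q μ| ≤ 1) : S.card ≤ 2 ^ d := by
  classical
  rcases S.eq_empty_or_nonempty with rfl | ⟨p₀, hp₀⟩
  · positivity
  -- for each coordinate, take the min over S
  set b : Fin d → ℤ := fun μ => (S.image (fun p => p μ)).min' (by
    exact (Finset.Nonempty.image ⟨p₀, hp₀⟩ _)) with hb
  have hbmem : ∀ μ, ∃ q ∈ S, q μ = b μ := by
    intro μ
    have := (S.image (fun p => p μ)).min'_mem (Finset.Nonempty.image ⟨p₀, hp₀⟩ _)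
    simpa [hb] using this
  have hrange : ∀ p ∈ S, ∀ μ, p μ = b μ ∨ p μ = b μ + 1 := by
    intro p hp μ
    obtain ⟨q, hq, hqb⟩ := hbmem μ
    have h1 : b μ ≤ p μ := Finset.min'_le _ _ (Finset.mem_image_of_mem _ hp)
    have h2 := abs_le.1 (h p hp q hq μ)
    omega
  have : S.card ≤ (Finset.univ : Finset (Fin d → Bool)).card := by
    apply Finset.card_le_card_of_injOn (fun p μ => decide (p μ = b μ))
    · intro p _; exact Finset.mem_univ _
    · intro p hp q hq hpq
      funext μ
      have := congrFun hpq μ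
      rcases hrange p hp μ with h1 | h1 <;> rcases hrange q hq μ with h2 | h2 <;>
        simp_all <;> omega
  simpa using this

lemma close_labels {d n : ℕ} (x : Fin n → (Fin d → ℝ)) (m : Fin n → (Fin d → ℤ))
    (hx : ∀ i : Fin n, ∀ μ : Fin d, ((m i μ : ℝ) ≤ x i μ ∧ x i μ ≤ (m i μ : ℝ) + 1))
    {i j : Fin n} (h : dist (x i) (x j) ≤ 1/2) (μ : Fin d) :
    |m i μ - m j μ| ≤ 1 := by
  have hcoord : |x i μ - x j μ| ≤ 1/2 := by
    have := dist_le_pi_dist (x i) (x j) μ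
    rw [Real.dist_eq] at this
    linarith
  obtain ⟨h1, h2⟩ := hx i μ
  obtain ⟨h3, h4⟩ := hx j μ
  have habs := abs_le.1 hcoord
  have hR : |(m i μ : ℝ) - (m j μ : ℝ)| ≤ 3/2 := by
    rw [abs_le]; constructor <;> linarith
  have : |(m i μ - m j μ : ℤ)| ≤ (1 : ℤ) := by
    have h5 : ((|m i μ - m j μ| : ℤ) : ℝ) ≤ 3/2 := by push_cast; exact hR
    by_contra hcon
    push_neg at hcon
    have : (2 : ℝ) ≤ ((|m i μ - m j μ| : ℤ) : ℝ) := by exact_mod_cast hcon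
    linarith
  exact this

/-- Pigeonhole counting along a chain. -/
lemma count_along_chain {d n : ℕ} (x : Fin n → (Fin d → ℝ)) (m : Fin n → (Fin d → ℤ))
    (hm : Function.Injective m)
    (hx : ∀ i : Fin n, ∀ μ : Fin d, ((m i μ : ℝ) ≤ x i μ ∧ x i μ ≤ (m i μ : ℝ) + 1))
    (L : List (Fin n)) (hnd : L.Nodup) (hcov : ∀ i : Fin n, i ∈ L)
    (c : ℝ) (hc : 0 ≤ c) (hlen : chainLen x L ≤ c) :
    (n : ℝ) ≤ 2 ^ d * (2 * c + 1) := by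
  classical
  have hlength : L.length = n := by
    have h1 : L.toFinset = Finset.univ := Finset.eq_univ_iff_forall.2 (by simpa using hcov)
    have := List.toFinset_card_of_nodup hnd
    rw [h1] at this
    simpa using this.symm
  set s : ℕ → ℝ := fun k => chainLen x (L.take (k+1)) with hs
  have hs_nonneg : ∀ k, 0 ≤ s k := fun k => chainLen_nonneg x _
  have hs_le : ∀ k, s k ≤ c := fun k =>
    le_trans (chainLen_sublist x (List.take_sublist _ _)) hlen
  -- classify positions by ⌊2 * s k⌋₊
  set T := ⌊2 * c⌋₊ + 1 with hT
  have hgmem : ∀ k : Fin L.length, ⌊2 * s k⌋₊ ∈ Finset.range T := by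
    intro k
    rw [Finset.mem_range, hT]
    have : ⌊2 * s (k : ℕ)⌋₊ ≤ ⌊2 * c⌋₊ := Nat.floor_le_floor (by nlinarith [hs_le (k : ℕ)])
    omega
  have hcount := Finset.card_eq_sum_card_fiberwise (s := (Finset.univ : Finset (Fin L.length)))
    (t := Finset.range T) (f := fun k : Fin L.length => ⌊2 * s (k : ℕ)⌋₊) (fun k _ => hgmem k)
  have hfiber : ∀ t ∈ Finset.range T,
      (Finset.univ.filter (fun k : Fin L.length => ⌊2 * s (k : ℕ)⌋₊ = t)).card ≤ 2 ^ d := by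
    intro t _
    set F := Finset.univ.filter (fun k : Fin L.length => ⌊2 * s (k : ℕ)⌋₊ = t) with hF
    have hclose : ∀ j ∈ F, ∀ k ∈ F, dist (x (L.get j)) (x (L.get k)) ≤ 1/2 := by
      intro j hj k hk
      rcases le_total (j : ℕ) (k : ℕ) with hjk | hjk
      · have h1 := chainLen_take_add x L hjk k.isLt
        have h2 : s (k : ℕ) - s (j : ℕ) ≤ 1/2 := by
          have hj' := (Finset.mem_filter.1 hj).2
          have hk' := (Finset.mem_filter.1 hk).2
          have e1 : (t : ℝ) ≤ 2 * s (j : ℕ) := by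
            rw [← hj']; exact Nat.floor_le (by nlinarith [hs_nonneg (j : ℕ)]) |>.trans (le_refl _)
          have e2 : 2 * s (k : ℕ) < t + 1 := by
            rw [← hk']
            exact_mod_cast Nat.lt_floor_add_one (2 * s (k : ℕ))
          linarith
        have : dist (x L[(j : ℕ)]) (x L[(k : ℕ)]) ≤ s (k : ℕ) - s (j : ℕ) := by
          simp only [hs] at h1 ⊢
          linarith
        simpa [List.get_eq_getElem] using this.trans h2
      · have h1 := chainLen_take_add x L hjk j.isLt
        have h2 : s (j : ℕ) - s (k : ℕ) ≤ 1/2 := by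
          have hj' := (Finset.mem_filter.1 hj).2
          have hk' := (Finset.mem_filter.1 hk).2
          have e1 : (t : ℝ) ≤ 2 * s (k : ℕ) := by
            rw [← hk']; exact Nat.floor_le (by nlinarith [hs_nonneg (k : ℕ)])
          have e2 : 2 * s (j : ℕ) < t + 1 := by
            rw [← hj']
            exact_mod_cast Nat.lt_floor_add_one (2 * s (j : ℕ))
          linarith
        have : dist (x L[(k : ℕ)]) (x L[(j : ℕ)]) ≤ s (j : ℕ) - s (k : ℕ) := by
          simp only [hs] at h1 ⊢
          linarith
        rw [dist_comm] at this
        simpa [List.get_eq_getElem] using this.trans h2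
    -- map to labels
    have hinj : Set.InjOn (fun k : Fin L.length => m (L.get k)) F := by
      intro j hj k hk hjk
      have := hm hjk
      have := List.Nodup.get_inj_iff hnd |>.1 this
      exact this
    have hcard : F.card = (F.image (fun k : Fin L.length => m (L.get k))).card :=
      (Finset.card_image_of_injOn hinj).symm
    rw [hcard]
    apply card_le_two_pow_of_pairwise_close
    intro p hp q hq μ
    obtain ⟨j, hj, rfl⟩ := Finset.mem_image.1 hp
    obtain ⟨k, hk, rfl⟩ := Finset.mem_image.1 hq
    exact close_labels x m hx (hclose j hj k hk) μ
  have hmain : L.length ≤ T * 2 ^ d := by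
    calc L.length = (Finset.univ : Finset (Fin L.length)).card := by simp
      _ = ∑ t ∈ Finset.range T,
            (Finset.univ.filter (fun k : Fin L.length => ⌊2 * s (k : ℕ)⌋₊ = t)).card := hcount
      _ ≤ ∑ _t ∈ Finset.range T, 2 ^ d := Finset.sum_le_sum hfiber
      _ = T * 2 ^ d := by simp [mul_comm]
  have hTle : (T : ℝ) ≤ 2 * c + 1 := by
    rw [hT]
    push_cast
    have := Nat.floor_le (by linarith : (0:ℝ) ≤ 2 * c)
    linarith
  calc (n : ℝ) = (L.length : ℝ) := by rw [hlength]
    _ ≤ (T : ℝ) * 2 ^ d := by exact_mod_cast hmain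
    _ ≤ (2 * c + 1) * 2 ^ d := by
        have : (0:ℝ) < 2 ^ d := by positivity
        nlinarith
    _ = 2 ^ d * (2 * c + 1) := by ring

end Count

/-- Counting cubes joined by a tree (part (3) of Lemma E.1 of the paper):
in `ℝ^d` with the sup norm, if `n ≥ 1` points lie in pairwise distinct closed unit lattice
cubes and are joined by a tree of total sup-length `ℓ`, then `n ≤ 4(2^d + 1)(ℓ + 1)`. -/
theorem cube_count_from_tree_length
    (d : ℕ) (hd : 1 ≤ d) (n : ℕ) (hn : 1 ≤ n)
    (x : Fin n → (Fin d → ℝ)) (m : Fin n → (Fin d → ℤ))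
    (hm : Function.Injective m)
    (hx : ∀ i : Fin n, ∀ μ : Fin d, ((m i μ : ℝ) ≤ x i μ ∧ x i μ ≤ (m i μ : ℝ) + 1))
    (τ : SimpleGraph (Fin n)) (hτ : τ.IsTree)
    (ℓ : ℝ) (hℓ : treeEdgeSum τ x = ℓ) :
    (n : ℝ) ≤ 4 * ((2 : ℝ) ^ d + 1) * (ℓ + 1) := by
  classical
  haveI : DecidableRel τ.Adj := Classical.decRel _
  have hsum : treeEdgeSum τ x = ∑ e ∈ τ.edgeFinset, sym2Len x e := by
    rw [treeEdgeSum, tsum_fintype, SimpleGraph.edgeFinset, ← Finset.sum_set_coe]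
    rfl
  have hℓnn : 0 ≤ ℓ := by
    rw [← hℓ, hsum]
    exact Finset.sum_nonneg fun e _ => sym2Len_nonneg x e
  obtain ⟨L₀, hcov₀, hlen₀⟩ := tree_tour n τ (le_refl _ |>.trans (by simp)) hτ x
  have hsum' : ∑ e ∈ τ.edgeFinset, sym2Len x e = ℓ := by rw [← hsum, hℓ]
  rw [hsum'] at hlen₀
  set L := L₀.dedup with hL
  have hnd : L.Nodup := L₀.nodup_dedup
  have hcov : ∀ i : Fin n, i ∈ L := fun i => List.mem_dedup.2 (hcov₀ i)
  have hlen : chainLen x L ≤ 2 * ℓ :=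
    (chainLen_sublist x (List.dedup_sublist L₀)).trans hlen₀
  have hmain := count_along_chain x m hm hx L hnd hcov (2 * ℓ) (by linarith) hlen
  have h2d : (1 : ℝ) ≤ 2 ^ d := one_le_pow₀ (by norm_num : (1:ℝ) ≤ 2)
  calc (n : ℝ) ≤ 2 ^ d * (2 * (2 * ℓ) + 1) := hmain
    _ ≤ 4 * ((2 : ℝ) ^ d + 1) * (ℓ + 1) := by nlinarith
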